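/- Let x₁, x₂ ∈ V be linearly independent vectors (so they span distinct points p₁ ≠ p₂ of P³ lying on the line l = span(x₁,x₂)), and let L₁, L₂ ⊆ V be lines with L₁ ∩ L₂ = 0 (skew) such that x₁ ∉ L₁ ∪ L₂ and x₂ ∉ L₁ ∪ L₂. Let Q = {q ∈ S²V* : q(x₁) = q(x₂) = 0 and q vanishes on L₁ and on L₂}. If l ∩ L₁ ≠ 0 and l ∩ L₂ ≠ 0 then dim Q = 3, and otherwise dim Q = 2. -/

import Mathlib

open Module

/-- The subspace of quadratic forms on `V` vanishing on a subset `S ⊆ V`. -/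
def vanishingQuadrics (k V : Type) [Field k] [AddCommGroup V] [Module k V]
    (S : Set V) : Submodule k (QuadraticForm k V) where
  carrier := {q | ∀ x ∈ S, q x = 0}
  zero_mem' := by intro x hx; simp
  add_mem' := by
    intro a b ha hb x hx
    simp [ha x hx, hb x hx]
  smul_mem' := by
    intro c q hq x hx
    simp [hq x hx]

open LinearMap

set_option linter.unusedSectionVars false
set_option maxHeartbeats 1000000


variable {k : Type} [Field k]

section dual
variable {M : Type} [AddCommGroup M] [Module k M] [FiniteDimensional k M]

lemma exists_dual_one' {x : M} (hx : x ≠ 0) : ∃ f : M →ₗ[k] k, f x = 1 := by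
  have h := (Module.forall_dual_apply_eq_zero_iff k x).not.mpr hx
  push_neg at h
  obtain ⟨f, hf⟩ := h
  exact ⟨(f x)⁻¹ • f, by simp [inv_mul_cancel₀ hf]⟩

lemma pair_symm' {x y : M} (h : LinearIndependent k ![x, y]) :
    LinearIndependent k ![y, x] := by
  rw [LinearIndependent.pair_iff] at h ⊢
  intro s t hst
  obtain ⟨h1, h2⟩ := h t s (by rw [add_comm]; exact hst)
  exact ⟨h2, h1⟩

lemma exists_dual_pair' (hM : finrank k M = 2) {x y : M}
    (h : LinearIndependent k ![x, y]) :
    ∃ f : M →ₗ[k] k, f x = 1 ∧ f y = 0 := by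
  have hcard : Fintype.card (Fin 2) = finrank k M := by simp [hM]
  let b := basisOfLinearIndependentOfCardEqFinrank h hcard
  have hb : ⇑b = ![x, y] := coe_basisOfLinearIndependentOfCardEqFinrank h hcard
  refine ⟨b.coord 0, ?_, ?_⟩
  · have : x = b 0 := by rw [hb]; simp
    rw [this, Basis.coord_apply, Basis.repr_self]; simp
  · have : y = b 1 := by rw [hb]; simp
    rw [this, Basis.coord_apply, Basis.repr_self]; simp
end dual

section rank
variable {M N : Type} [AddCommGroup M] [Module k M] [FiniteDimensional k M]
  [AddCommGroup N] [Module k N] [FiniteDimensional k N]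

/-- evaluation of a bilinear map at a pair -/
noncomputable def evalBil (k : Type) [Field k] {M N : Type} [AddCommGroup M] [Module k M]
    [AddCommGroup N] [Module k N] (u : M) (v : N) : (M →ₗ[k] N →ₗ[k] k) →ₗ[k] k :=
  (LinearMap.applyₗ v).comp (LinearMap.applyₗ u)

@[simp] lemma evalBil_apply (u : M) (v : N) (C : M →ₗ[k] N →ₗ[k] k) :
    evalBil k u v C = C u v := rfl

lemma finrank_bil (hM : finrank k M = 2) (hN : finrank k N = 2) :
    finrank k (M →ₗ[k] N →ₗ[k] k) = 4 := by
  rw [Module.finrank_linearMap, Module.finrank_linearMap, hM, hN, finrank_self]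

lemma rank_lemma_A (hM : finrank k M = 2) (hN : finrank k N = 2)
    {u₁ u₂ : M} {v₁ v₂ : N} (hu₁ : u₁ ≠ 0) (hv₁ : v₁ ≠ 0)
    {a b : k} (hu₂ : u₂ = a • u₁) (hv₂ : v₂ = b • v₁) :
    finrank k (LinearMap.ker ((evalBil k u₁ v₁).prod (evalBil k u₂ v₂))) = 3 := by
  have hker : LinearMap.ker ((evalBil k u₁ v₁).prod (evalBil k u₂ v₂))
      = LinearMap.ker (evalBil k u₁ v₁) := by
    ext C
    simp only [mem_ker, prod_apply, Function.prod, Prod.mk_eq_zero, evalBil_apply, hu₂, hv₂,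
      map_smul, LinearMap.smul_apply, smul_eq_mul]
    constructor
    · rintro ⟨h, -⟩; exact h
    · intro h; exact ⟨h, by rw [h]; ring⟩
  rw [hker]
  obtain ⟨f, hf⟩ := exists_dual_one' (k := k) hu₁
  obtain ⟨g, hg⟩ := exists_dual_one' (k := k) hv₁
  have hsurj : Function.Surjective (evalBil k u₁ v₁) := by
    intro c
    exact ⟨c • f.smulRight g, by simp [hf, hg]⟩
  have h1 := LinearMap.finrank_range_add_finrank_ker (V := M →ₗ[k] N →ₗ[k] k) (V₂ := k) (evalBil k u₁ v₁)
  rw [range_eq_top.mpr hsurj] at h1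
  rw [finrank_bil hM hN] at h1
  simp only [finrank_top, finrank_self] at h1
  omega

lemma rank_lemma_B (hM : finrank k M = 2) (hN : finrank k N = 2)
    {u₁ u₂ : M} {v₁ v₂ : N} (hu₁ : u₁ ≠ 0) (hu₂ : u₂ ≠ 0) (hv₁ : v₁ ≠ 0) (hv₂ : v₂ ≠ 0)
    (hind : LinearIndependent k ![u₁, u₂] ∨ LinearIndependent k ![v₁, v₂]) :
    finrank k (LinearMap.ker ((evalBil k u₁ v₁).prod (evalBil k u₂ v₂))) = 2 := by
  set ψ := (evalBil k u₁ v₁).prod (evalBil k u₂ v₂) with hψ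
  have h10 : (1, 0) ∈ LinearMap.range ψ := by
    obtain ⟨f, g, hf1, h0⟩ : ∃ (f : M →ₗ[k] k) (g : N →ₗ[k] k),
        f u₁ * g v₁ = 1 ∧ f u₂ * g v₂ = 0 := by
      rcases hind with h | h
      · obtain ⟨f, hf1, hf2⟩ := exists_dual_pair' hM h
        obtain ⟨g, hg⟩ := exists_dual_one' (k := k) hv₁
        exact ⟨f, g, by rw [hf1, hg]; ring, by rw [hf2]; ring⟩
      · obtain ⟨g, hg1, hg2⟩ := exists_dual_pair' hN h
        obtain ⟨f, hf⟩ := exists_dual_one' (k := k) hu₁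
        exact ⟨f, g, by rw [hf, hg1]; ring, by rw [hg2]; ring⟩
    exact ⟨f.smulRight g, by simp [hψ, Function.prod, hf1, h0]⟩
  have h01 : (0, 1) ∈ LinearMap.range ψ := by
    obtain ⟨f, g, hf1, h0⟩ : ∃ (f : M →ₗ[k] k) (g : N →ₗ[k] k),
        f u₂ * g v₂ = 1 ∧ f u₁ * g v₁ = 0 := by
      rcases hind with h | h
      · obtain ⟨f, hf1, hf2⟩ := exists_dual_pair' hM (pair_symm' h)
        obtain ⟨g, hg⟩ := exists_dual_one' (k := k) hv₂
        exact ⟨f, g, by rw [hf1, hg]; ring, by rw [hf2]; ring⟩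
      · obtain ⟨g, hg1, hg2⟩ := exists_dual_pair' hN (pair_symm' h)
        obtain ⟨f, hf⟩ := exists_dual_one' (k := k) hu₂
        exact ⟨f, g, by rw [hf, hg1]; ring, by rw [hg2]; ring⟩
    exact ⟨f.smulRight g, by simp [hψ, Function.prod, hf1, h0]⟩
  have hsurj : Function.Surjective ψ := by
    rw [← range_eq_top, Submodule.eq_top_iff']
    rintro ⟨c, d⟩
    have : (c, d) = c • ((1 : k), (0 : k)) + d • ((0 : k), (1 : k)) := by
      simp [Prod.ext_iff]
    rw [this]
    exact Submodule.add_mem _ (Submodule.smul_mem _ _ h10) (Submodule.smul_mem _ _ h01)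
  have h1 := LinearMap.finrank_range_add_finrank_ker (V := M →ₗ[k] N →ₗ[k] k) (V₂ := k × k) ψ
  rw [range_eq_top.mpr hsurj] at h1
  rw [finrank_bil hM hN] at h1
  rw [finrank_top] at h1
  simp only [finrank_prod, finrank_self] at h1
  omega

end rank

section phi
variable {k V : Type} [Field k] [AddCommGroup V] [Module k V]

noncomputable def PhiMap (L₁ L₂ : Submodule k V) (hc : IsCompl L₁ L₂) :
    (L₁ →ₗ[k] L₂ →ₗ[k] k) →ₗ[k] QuadraticForm k V where
  toFun C := LinearMap.BilinMap.toQuadraticMap (C.compl₁₂ (L₁.linearProjOfIsCompl L₂ hc)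
      (L₂.linearProjOfIsCompl L₁ hc.symm))
  map_add' C D := by
    ext x
    simp [LinearMap.BilinMap.toQuadraticMap_apply, LinearMap.compl₁₂_apply,
      LinearMap.add_apply, QuadraticMap.add_apply]
  map_smul' c C := by
    ext x
    simp [LinearMap.BilinMap.toQuadraticMap_apply, LinearMap.compl₁₂_apply,
      LinearMap.smul_apply, QuadraticMap.smul_apply, smul_eq_mul]

@[simp] lemma PhiMap_apply (L₁ L₂ : Submodule k V) (hc : IsCompl L₁ L₂)
    (C : L₁ →ₗ[k] L₂ →ₗ[k] k) (x : V) :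
    PhiMap L₁ L₂ hc C x = C (L₁.linearProjOfIsCompl L₂ hc x)
      (L₂.linearProjOfIsCompl L₁ hc.symm x) := rfl

lemma PhiMap_injective [FiniteDimensional k V] (L₁ L₂ : Submodule k V) (hc : IsCompl L₁ L₂) :
    Function.Injective (PhiMap L₁ L₂ hc) := by
  refine (LinearMap.ker_eq_bot (R := k) (R₂ := k) (M := L₁ →ₗ[k] L₂ →ₗ[k] k) (M₂ := QuadraticForm k V) (f := PhiMap L₁ L₂ hc)).mp ?_
  rw [Submodule.eq_bot_iff]
  intro C hC
  rw [LinearMap.mem_ker] at hC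
  ext u v
  have h := congrArg (fun q : QuadraticForm k V => q ((u : V) + (v : V))) hC
  simpa [Submodule.linearProjOfIsCompl] using h

lemma finrank_vanishing [FiniteDimensional k V] (L₁ L₂ : Submodule k V)
    (hc : IsCompl L₁ L₂) (x₁ x₂ : V) :
    finrank k (vanishingQuadrics k V ({x₁, x₂} ∪ (L₁ : Set V) ∪ (L₂ : Set V))) =
    finrank k (LinearMap.ker
      ((evalBil k (L₁.linearProjOfIsCompl L₂ hc x₁) (L₂.linearProjOfIsCompl L₁ hc.symm x₁)).prod
       (evalBil k (L₁.linearProjOfIsCompl L₂ hc x₂) (L₂.linearProjOfIsCompl L₁ hc.symm x₂)))) := by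
  set p₁ := L₁.linearProjOfIsCompl L₂ hc with hp₁
  set p₂ := L₂.linearProjOfIsCompl L₁ hc.symm with hp₂
  set ψ := (evalBil k (p₁ x₁) (p₂ x₁)).prod (evalBil k (p₁ x₂) (p₂ x₂)) with hψdef
  have hsum : ∀ x : V, ((p₁ x : V) + (p₂ x : V)) = x := fun x =>
    Submodule.projection_add_projection_eq_self hc x
  have hQ : vanishingQuadrics k V ({x₁, x₂} ∪ (L₁ : Set V) ∪ (L₂ : Set V)) =
      (LinearMap.ker ψ).map (PhiMap L₁ L₂ hc) := by
    apply le_antisymm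
    · intro q hq
      have hq' : ∀ x ∈ ({x₁, x₂} ∪ (L₁ : Set V) ∪ (L₂ : Set V)), q x = 0 := hq
      have hqL₁ : ∀ y ∈ L₁, q y = 0 := fun y hy => hq' y (Or.inl (Or.inr hy))
      have hqL₂ : ∀ y ∈ L₂, q y = 0 := fun y hy => hq' y (Or.inr hy)
      have hq1 : q x₁ = 0 := hq' x₁ (Or.inl (Or.inl (by simp)))
      have hq2 : q x₂ = 0 := hq' x₂ (Or.inl (Or.inl (by simp)))
      set C := (QuadraticMap.polarBilin q).compl₁₂ L₁.subtype L₂.subtype with hCdef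
      have hCval : ∀ (u : L₁) (v : L₂), C u v = q ((u : V) + (v : V)) := by
        intro u v
        have : C u v = QuadraticMap.polar q (u : V) (v : V) := rfl
        rw [this, QuadraticMap.polar]
        rw [hqL₁ u u.2, hqL₂ v v.2]
        ring
      have hΦq : PhiMap L₁ L₂ hc C = q := by
        ext x
        rw [PhiMap_apply, hCval, hsum]
      refine Submodule.mem_map.mpr ⟨C, ?_, hΦq⟩
      rw [LinearMap.mem_ker, hψdef]
      have e1 : C (p₁ x₁) (p₂ x₁) = q x₁ := by rw [hCval, hsum]
      have e2 : C (p₁ x₂) (p₂ x₂) = q x₂ := by rw [hCval, hsum]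
      have : (C (p₁ x₁) (p₂ x₁), C (p₁ x₂) (p₂ x₂)) = ((0 : k), (0 : k)) := by
        rw [e1, e2, hq1, hq2]
      exact this
    · intro q hqmem
      obtain ⟨C, hC, rfl⟩ := Submodule.mem_map.mp hqmem
      rw [LinearMap.mem_ker] at hC
      have hC1 : C (p₁ x₁) (p₂ x₁) = 0 := congrArg Prod.fst hC
      have hC2 : C (p₁ x₂) (p₂ x₂) = 0 := congrArg Prod.snd hC
      intro x hxmem
      rcases hxmem with (hx12 | hxL₁) | hxL₂
      · rcases hx12 with h | h
        · subst h; simpa using hC1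
        · rw [Set.mem_singleton_iff] at h; subst h; simpa using hC2
      · rw [PhiMap_apply]
        have : p₂ x = 0 := (Submodule.linearProjOfIsCompl_apply_eq_zero_iff hc.symm).mpr hxL₁
        rw [this, map_zero]
      · rw [PhiMap_apply]
        have : p₁ x = 0 := (Submodule.linearProjOfIsCompl_apply_eq_zero_iff hc).mpr hxL₂
        rw [this, map_zero, LinearMap.zero_apply]
  rw [hQ]
  exact ((Submodule.equivMapOfInjective _ (PhiMap_injective L₁ L₂ hc) _).finrank_eq).symm

end phi

/-- Let `x₁, x₂ ∈ V` be linearly independent (giving distinct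
points `p₁ ≠ p₂` on the line `l = span(x₁,x₂)` of `P³`), and let `L₁, L₂` be
skew lines with `x₁, x₂ ∉ L₁ ∪ L₂`.  Let `Q` be the space of quadratic forms
vanishing at `x₁, x₂` and on `L₁` and `L₂`.  If `l` meets both `L₁` and `L₂`
then `dim Q = 3`, and otherwise `dim Q = 2`. -/
theorem statement16
    (k V : Type) [Field k] [IsAlgClosed k] [CharZero k]
    [AddCommGroup V] [Module k V] [FiniteDimensional k V]
    (hV : finrank k V = 4)
    (x₁ x₂ : V) (hx : LinearIndependent k ![x₁, x₂])
    (L₁ L₂ : Submodule k V)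
    (hL₁ : finrank k L₁ = 2) (hL₂ : finrank k L₂ = 2)
    (hskew : L₁ ⊓ L₂ = ⊥)
    (hx₁L₁ : x₁ ∉ L₁) (hx₁L₂ : x₁ ∉ L₂) (hx₂L₁ : x₂ ∉ L₁) (hx₂L₂ : x₂ ∉ L₂) :
    (Submodule.span k {x₁, x₂} ⊓ L₁ ≠ ⊥ ∧ Submodule.span k {x₁, x₂} ⊓ L₂ ≠ ⊥ →
      finrank k (vanishingQuadrics k V ({x₁, x₂} ∪ (L₁ : Set V) ∪ (L₂ : Set V))) = 3) ∧
    (¬(Submodule.span k {x₁, x₂} ⊓ L₁ ≠ ⊥ ∧ Submodule.span k {x₁, x₂} ⊓ L₂ ≠ ⊥) →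
      finrank k (vanishingQuadrics k V ({x₁, x₂} ∪ (L₁ : Set V) ∪ (L₂ : Set V))) = 2) := by
  -- L₁ and L₂ are complementary
  have hc : IsCompl L₁ L₂ := by
    refine ⟨disjoint_iff.mpr hskew, codisjoint_iff.mpr ?_⟩
    apply Submodule.eq_top_of_finrank_eq
    have h := Submodule.finrank_sup_add_finrank_inf_eq L₁ L₂
    rw [hskew, hL₁, hL₂] at h
    simp only [finrank_bot] at h
    rw [hV]; omega
  set p₁ := L₁.linearProjOfIsCompl L₂ hc with hp₁
  set p₂ := L₂.linearProjOfIsCompl L₁ hc.symm with hp₂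
  have hsum : ∀ x : V, ((p₁ x : V) + (p₂ x : V)) = x := fun x =>
    Submodule.projection_add_projection_eq_self hc x
  have hmemL₁ : ∀ y : V, y ∈ L₁ ↔ p₂ y = 0 := fun y =>
    (Submodule.linearProjOfIsCompl_apply_eq_zero_iff hc.symm).symm
  have hmemL₂ : ∀ y : V, y ∈ L₂ ↔ p₁ y = 0 := fun y =>
    (Submodule.linearProjOfIsCompl_apply_eq_zero_iff hc).symm
  -- nonvanishing of the projections of x₁, x₂
  have hu₁ : p₁ x₁ ≠ 0 := by
    intro h0
    apply hx₁L₂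
    have := hsum x₁
    rw [h0] at this
    simp only [Submodule.coe_zero, zero_add] at this
    rw [← this]; exact (p₂ x₁).2
  have hu₂ : p₁ x₂ ≠ 0 := by
    intro h0
    apply hx₂L₂
    have := hsum x₂
    rw [h0] at this
    simp only [Submodule.coe_zero, zero_add] at this
    rw [← this]; exact (p₂ x₂).2
  have hv₁ : p₂ x₁ ≠ 0 := by
    intro h0
    apply hx₁L₁
    have := hsum x₁
    rw [h0] at this
    simp only [Submodule.coe_zero, add_zero] at this
    rw [← this]; exact (p₁ x₁).2
  have hv₂ : p₂ x₂ ≠ 0 := by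
    intro h0
    apply hx₂L₁
    have := hsum x₂
    rw [h0] at this
    simp only [Submodule.coe_zero, add_zero] at this
    rw [← this]; exact (p₁ x₂).2
  have hxpair := LinearIndependent.pair_iff.mp hx
  -- meeting L₁ means the p₂-projections are proportional
  have h1to : Submodule.span k {x₁, x₂} ⊓ L₁ ≠ ⊥ → ∃ b : k, p₂ x₂ = b • p₂ x₁ := by
    intro h
    rw [Submodule.ne_bot_iff] at h
    obtain ⟨y, hy, hy0⟩ := h
    rw [Submodule.mem_inf] at hy
    obtain ⟨hys, hyL⟩ := hy
    rw [Submodule.mem_span_pair] at hys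
    obtain ⟨a, b, hab⟩ := hys
    have hproj : a • p₂ x₁ + b • p₂ x₂ = 0 := by
      have : p₂ (a • x₁ + b • x₂) = 0 := by rw [hab]; exact (hmemL₁ y).mp hyL
      simpa [map_add, map_smul] using this
    have hb : b ≠ 0 := by
      intro hb0
      rw [hb0, zero_smul, add_zero] at hproj
      have ha : a ≠ 0 := by
        intro ha0
        apply hy0
        rw [← hab, ha0, hb0, zero_smul, zero_smul, add_zero]
      exact hv₁ (by simpa [ha] using smul_eq_zero.mp hproj)
    refine ⟨-(b⁻¹ * a), ?_⟩
    have hb2 : b • p₂ x₂ = -(a • p₂ x₁) := eq_neg_of_add_eq_zero_right hproj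
    calc p₂ x₂ = b⁻¹ • (b • p₂ x₂) := by rw [smul_smul, inv_mul_cancel₀ hb, one_smul]
      _ = b⁻¹ • -(a • p₂ x₁) := by rw [hb2]
      _ = (-(b⁻¹ * a)) • p₂ x₁ := by rw [smul_neg, smul_smul, neg_smul]
  have h2to : Submodule.span k {x₁, x₂} ⊓ L₂ ≠ ⊥ → ∃ a : k, p₁ x₂ = a • p₁ x₁ := by
    intro h
    rw [Submodule.ne_bot_iff] at h
    obtain ⟨y, hy, hy0⟩ := h
    rw [Submodule.mem_inf] at hy
    obtain ⟨hys, hyL⟩ := hy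
    rw [Submodule.mem_span_pair] at hys
    obtain ⟨a, b, hab⟩ := hys
    have hproj : a • p₁ x₁ + b • p₁ x₂ = 0 := by
      have : p₁ (a • x₁ + b • x₂) = 0 := by rw [hab]; exact (hmemL₂ y).mp hyL
      simpa [map_add, map_smul] using this
    have hb : b ≠ 0 := by
      intro hb0
      rw [hb0, zero_smul, add_zero] at hproj
      have ha : a ≠ 0 := by
        intro ha0
        apply hy0
        rw [← hab, ha0, hb0, zero_smul, zero_smul, add_zero]
      exact hu₁ (by simpa [ha] using smul_eq_zero.mp hproj)
    refine ⟨-(b⁻¹ * a), ?_⟩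
    have hb2 : b • p₁ x₂ = -(a • p₁ x₁) := eq_neg_of_add_eq_zero_right hproj
    calc p₁ x₂ = b⁻¹ • (b • p₁ x₂) := by rw [smul_smul, inv_mul_cancel₀ hb, one_smul]
      _ = b⁻¹ • -(a • p₁ x₁) := by rw [hb2]
      _ = (-(b⁻¹ * a)) • p₁ x₁ := by rw [smul_neg, smul_smul, neg_smul]
  -- not meeting L₁ means the p₂-projections are independent
  have h1from : Submodule.span k {x₁, x₂} ⊓ L₁ = ⊥ →
      LinearIndependent k ![p₂ x₁, p₂ x₂] := by
    intro h
    rw [LinearIndependent.pair_iff]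
    intro s t hst
    have hyL : s • x₁ + t • x₂ ∈ L₁ := by
      rw [hmemL₁]
      simpa [map_add, map_smul] using hst
    have hys : s • x₁ + t • x₂ ∈ Submodule.span k {x₁, x₂} :=
      Submodule.mem_span_pair.mpr ⟨s, t, rfl⟩
    have : s • x₁ + t • x₂ ∈ Submodule.span k {x₁, x₂} ⊓ L₁ := Submodule.mem_inf.mpr ⟨hys, hyL⟩
    rw [h, Submodule.mem_bot] at this
    exact hxpair s t this
  have h2from : Submodule.span k {x₁, x₂} ⊓ L₂ = ⊥ →
      LinearIndependent k ![p₁ x₁, p₁ x₂] := by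
    intro h
    rw [LinearIndependent.pair_iff]
    intro s t hst
    have hyL : s • x₁ + t • x₂ ∈ L₂ := by
      rw [hmemL₂]
      simpa [map_add, map_smul] using hst
    have hys : s • x₁ + t • x₂ ∈ Submodule.span k {x₁, x₂} :=
      Submodule.mem_span_pair.mpr ⟨s, t, rfl⟩
    have : s • x₁ + t • x₂ ∈ Submodule.span k {x₁, x₂} ⊓ L₂ := Submodule.mem_inf.mpr ⟨hys, hyL⟩
    rw [h, Submodule.mem_bot] at this
    exact hxpair s t this
  constructor
  · rintro ⟨h1, h2⟩
    rw [finrank_vanishing L₁ L₂ hc x₁ x₂]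
    obtain ⟨b, hb⟩ := h1to h1
    obtain ⟨a, ha⟩ := h2to h2
    exact rank_lemma_A hL₁ hL₂ hu₁ hv₁ ha hb
  · intro h
    rw [not_and_or] at h
    rw [finrank_vanishing L₁ L₂ hc x₁ x₂]
    apply rank_lemma_B hL₁ hL₂ hu₁ hu₂ hv₁ hv₂
    rcases h with h | h <;> rw [not_ne_iff] at h
    · right; exact h1from h
    · left; exact h2from h
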